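/- If an extreme point M of the set of complex doubly substochastic n × n matrices has some row whose ℓ¹-sum is strictly less than 1, then a contradiction follows; equivalently, every extreme point of the cdss matrices has all row sums and column sums of absolute values exactly equal to 1. -/

import Mathlib

/-- A complex square matrix is complex doubly substochastic (cdss) if every
row and every column has ℓ¹-sum of absolute values at most 1. -/
def IsCdss {n : ℕ} (M : Matrix (Fin n) (Fin n) ℂ) : Prop :=
  (∀ i, ∑ j, ‖M i j‖ ≤ 1) ∧ (∀ j, ∑ i, ‖M i j‖ ≤ 1)

lemma cdss_key {n : ℕ} (M : Matrix (Fin n) (Fin n) ℂ) (hM : IsCdss M)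
    (hext : ∀ A B : Matrix (Fin n) (Fin n) ℂ, IsCdss A → IsCdss B →
      M = (2⁻¹ : ℝ) • (A + B) → A = B)
    (i j : Fin n) (hr : ∑ k, ‖M i k‖ < 1) (hc : ∑ k, ‖M k j‖ < 1) : False := by
  set ε : ℝ := min (1 - ∑ k, ‖M i k‖) (1 - ∑ k, ‖M k j‖) with hεdef
  have hε : 0 < ε := lt_min (by linarith) (by linarith)
  set E : Matrix (Fin n) (Fin n) ℂ := fun p q => if p = i ∧ q = j then (ε : ℂ) else 0 with hE
  have hEnorm : ∀ p q, ‖E p q‖ = if p = i ∧ q = j then ε else 0 := by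
    intro p q
    by_cases h : p = i ∧ q = j <;> simp [hE, h, abs_of_pos hε]
  have hrowE : ∀ p, ∑ q, ‖E p q‖ = if p = i then ε else 0 := by
    intro p
    by_cases hp : p = i
    · subst hp; simp [hEnorm]
    · simp [hEnorm, hp]
  have hcolE : ∀ q, ∑ p, ‖E p q‖ = if q = j then ε else 0 := by
    intro q
    by_cases hq : q = j
    · subst hq; simp [hEnorm]
    · simp [hEnorm, hq]
  have hrεi : ∑ k, ‖M i k‖ + ε ≤ 1 := by
    have := min_le_left (1 - ∑ k, ‖M i k‖) (1 - ∑ k, ‖M k j‖)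
    rw [← hεdef] at this; linarith
  have hcεj : ∑ k, ‖M k j‖ + ε ≤ 1 := by
    have := min_le_right (1 - ∑ k, ‖M i k‖) (1 - ∑ k, ‖M k j‖)
    rw [← hεdef] at this; linarith
  have hrowbound : ∀ p, ∑ q, ‖M p q‖ + (if p = i then ε else 0) ≤ 1 := by
    intro p
    by_cases hp : p = i
    · subst hp; simpa using hrεi
    · simpa [hp] using hM.1 p
  have hcolbound : ∀ q, ∑ p, ‖M p q‖ + (if q = j then ε else 0) ≤ 1 := by
    intro q
    by_cases hq : q = j
    · subst hq; simpa using hcεj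
    · simpa [hq] using hM.2 q
  have hA : IsCdss (M + E) := by
    constructor
    · intro p
      calc ∑ q, ‖(M + E) p q‖ ≤ ∑ q, (‖M p q‖ + ‖E p q‖) :=
            Finset.sum_le_sum (fun q _ => norm_add_le _ _)
        _ = ∑ q, ‖M p q‖ + ∑ q, ‖E p q‖ := Finset.sum_add_distrib
        _ ≤ 1 := by rw [hrowE]; exact hrowbound p
    · intro q
      calc ∑ p, ‖(M + E) p q‖ ≤ ∑ p, (‖M p q‖ + ‖E p q‖) :=
            Finset.sum_le_sum (fun p _ => norm_add_le _ _)
        _ = ∑ p, ‖M p q‖ + ∑ p, ‖E p q‖ := Finset.sum_add_distrib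
        _ ≤ 1 := by rw [hcolE]; exact hcolbound q
  have hB : IsCdss (M - E) := by
    constructor
    · intro p
      calc ∑ q, ‖(M - E) p q‖ ≤ ∑ q, (‖M p q‖ + ‖E p q‖) :=
            Finset.sum_le_sum (fun q _ => norm_sub_le _ _)
        _ = ∑ q, ‖M p q‖ + ∑ q, ‖E p q‖ := Finset.sum_add_distrib
        _ ≤ 1 := by rw [hrowE]; exact hrowbound p
    · intro q
      calc ∑ p, ‖(M - E) p q‖ ≤ ∑ p, (‖M p q‖ + ‖E p q‖) :=
            Finset.sum_le_sum (fun p _ => norm_sub_le _ _)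
        _ = ∑ p, ‖M p q‖ + ∑ p, ‖E p q‖ := Finset.sum_add_distrib
        _ ≤ 1 := by rw [hcolE]; exact hcolbound q
  have hdecomp : M = (2⁻¹ : ℝ) • ((M + E) + (M - E)) := by
    ext p q
    simp [Matrix.add_apply, Matrix.sub_apply, Matrix.smul_apply]
    ring
  have heq := hext _ _ hA hB hdecomp
  have h2 : (M + E) i j = (M - E) i j := by rw [heq]
  change M i j + E i j = M i j - E i j at h2
  simp only [hE, eq_self_iff_true, and_self, if_true] at h2
  have : (ε : ℂ) = 0 := by linear_combination (h2) / 2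
  exact hε.ne' (by exact_mod_cast this)

theorem stmt_10 (n : ℕ) (M : Matrix (Fin n) (Fin n) ℂ) (hM : IsCdss M)
    (hext : ∀ A B : Matrix (Fin n) (Fin n) ℂ, IsCdss A → IsCdss B →
      M = (2⁻¹ : ℝ) • (A + B) → A = B) :
    (∀ i, ∑ j, ‖M i j‖ = 1) ∧ (∀ j, ∑ i, ‖M i j‖ = 1) := by
  have hcomm : ∑ p, ∑ q, ‖M p q‖ = ∑ q, ∑ p, ‖M p q‖ := Finset.sum_comm
  constructor
  · intro i
    by_contra h
    have hr : ∑ k, ‖M i k‖ < 1 := lt_of_le_of_ne (hM.1 i) h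
    -- find a column with slack
    have hj : ∃ j, ∑ k, ‖M k j‖ < 1 := by
      by_contra hj
      push_neg at hj
      have h1 : ∑ p, ∑ q, ‖M p q‖ < ∑ p : Fin n, (1 : ℝ) :=
        Finset.sum_lt_sum (fun p _ => hM.1 p) ⟨i, Finset.mem_univ i, hr⟩
      have h2 : ∑ q : Fin n, (1 : ℝ) ≤ ∑ q, ∑ p, ‖M p q‖ :=
        Finset.sum_le_sum (fun q _ => hj q)
      rw [hcomm] at h1
      linarith
    obtain ⟨j, hc⟩ := hj
    exact cdss_key M hM hext i j hr hc
  · intro j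
    by_contra h
    have hc : ∑ k, ‖M k j‖ < 1 := lt_of_le_of_ne (hM.2 j) h
    have hi : ∃ i, ∑ k, ‖M i k‖ < 1 := by
      by_contra hi
      push_neg at hi
      have h1 : ∑ q, ∑ p, ‖M p q‖ < ∑ q : Fin n, (1 : ℝ) :=
        Finset.sum_lt_sum (fun q _ => hM.2 q) ⟨j, Finset.mem_univ j, hc⟩
      have h2 : ∑ p : Fin n, (1 : ℝ) ≤ ∑ p, ∑ q, ‖M p q‖ :=
        Finset.sum_le_sum (fun p _ => hi p)
      rw [hcomm] at h2
      linarith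
    obtain ⟨i, hr⟩ := hi
    exact cdss_key M hM hext i j hr hc
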